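/- Let (A,B,C,D) be a controllable and observable (minimal) LTI system with state dimension n_x and lag l. Let (u_d, y_d) be a trajectory of the system of length N, let (u_ini, y_ini) be a trajectory of the system of length L_0 with L_0 ≥ l, let u_s be an input sequence of length L_s, and set L = L_0 + L_s. Assume u_d is persistently exciting of order L + n_x. Partition the block Hankel matrices 𝓗_L(u_d) = [U_p; U_f] and 𝓗_L(y_d) = [Y_p; Y_f], where U_p, Y_p contain the first L_0 block rows and U_f, Y_f the last L_s block rows. Then: (i) there exists a vector g ∈ ℝ^{N−L+1} such that U_p g = u_ini, Y_p g = y_ini, and U_f g = u_s; and (ii) for every such g and for every output sequence y_s of length L_s such that the concatenated sequences (u_ini followed by u_s, y_ini followed by y_s) form a trajectory of the system, one has y_s = Y_f g (stacked as a vector). -/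

import Mathlib

open Matrix Finset

namespace DDSim

/-- `(u, y)` is a length-`T` input/output trajectory of the LTI system `(A, B, C, D)`
with state sequence `x`. -/
def IsStateTraj {nx nu ny : ℕ} (A : Matrix (Fin nx) (Fin nx) ℝ) (B : Matrix (Fin nx) (Fin nu) ℝ)
    (C : Matrix (Fin ny) (Fin nx) ℝ) (D : Matrix (Fin ny) (Fin nu) ℝ)
    (T : ℕ) (u : ℕ → Fin nu → ℝ) (y : ℕ → Fin ny → ℝ) (x : ℕ → Fin nx → ℝ) : Prop :=
  ∀ t < T, x (t + 1) = A.mulVec (x t) + B.mulVec (u t) ∧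
           y t = C.mulVec (x t) + D.mulVec (u t)

/-- `(u, y)` is a length-`T` input/output trajectory of the LTI system `(A, B, C, D)`. -/
def IsTraj {nx nu ny : ℕ} (A : Matrix (Fin nx) (Fin nx) ℝ) (B : Matrix (Fin nx) (Fin nu) ℝ)
    (C : Matrix (Fin ny) (Fin nx) ℝ) (D : Matrix (Fin ny) (Fin nu) ℝ)
    (T : ℕ) (u : ℕ → Fin nu → ℝ) (y : ℕ → Fin ny → ℝ) : Prop :=
  ∃ x : ℕ → Fin nx → ℝ, IsStateTraj A B C D T u y x

/-- Controllability matrix `[B, AB, …, A^{n_x-1}B]`. -/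
def ctrbMat {nx nu : ℕ} (A : Matrix (Fin nx) (Fin nx) ℝ) (B : Matrix (Fin nx) (Fin nu) ℝ) :
    Matrix (Fin nx) (Fin nx × Fin nu) ℝ :=
  fun k p => (A ^ (p.1 : ℕ) * B) k p.2

/-- Extended observability matrix `O_i = [C; CA; …; CA^{i-1}]`. -/
def obsMat {nx ny : ℕ} (A : Matrix (Fin nx) (Fin nx) ℝ) (C : Matrix (Fin ny) (Fin nx) ℝ)
    (i : ℕ) : Matrix (Fin i × Fin ny) (Fin nx) ℝ :=
  fun p k => (C * A ^ (p.1 : ℕ)) p.2 k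

/-- Block Hankel matrix of depth `L` of a length-`N` signal: `(i, j)` block entry `z_{i+j}`. -/
def hankel {nz : ℕ} (z : ℕ → Fin nz → ℝ) (L N : ℕ) :
    Matrix (Fin L × Fin nz) (Fin (N - L + 1)) ℝ :=
  fun p j => z ((p.1 : ℕ) + (j : ℕ)) p.2

/-- Block of `rows` consecutive block rows (starting at shift `off`) of a block Hankel matrix
with `cols` columns: `(i, j)` block entry `z_{off+i+j}`. -/
def blockRows {nz : ℕ} (z : ℕ → Fin nz → ℝ) (off rows cols : ℕ) :
    Matrix (Fin rows × Fin nz) (Fin cols) ℝ :=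
  fun p j => z (off + (p.1 : ℕ) + (j : ℕ)) p.2

lemma inj_of_rank_cols {m n : Type*} [Fintype m] [Fintype n] (M : Matrix m n ℝ)
    (h : M.rank = Fintype.card n) : Function.Injective M.mulVec := by
  have hker : LinearMap.ker M.mulVecLin = ⊥ := by
    have h1 := LinearMap.finrank_range_add_finrank_ker M.mulVecLin
    rw [Matrix.rank] at h
    rw [h, Module.finrank_pi ℝ] at h1
    have : Module.finrank ℝ (LinearMap.ker M.mulVecLin) = 0 := by omega
    exact Submodule.finrank_eq_zero.mp this
  exact fun a b hab => LinearMap.ker_eq_bot.mp hker hab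

lemma vecMul_inj_of_rank_rows {m n : Type*} [Fintype m] [Fintype n] (M : Matrix m n ℝ)
    (h : M.rank = Fintype.card m) : Function.Injective (M.vecMul ·) := by
  have ht : Mᵀ.rank = Fintype.card m := by rw [Matrix.rank_transpose]; exact h
  have := inj_of_rank_cols Mᵀ ht
  intro a b hab
  apply this
  simpa [Matrix.mulVec_transpose] using hab

lemma mulVec_surj_of_vecMul_inj {m n : Type*} [Fintype m] [Fintype n] (M : Matrix m n ℝ)
    (h : Function.Injective (M.vecMul ·)) : Function.Surjective M.mulVec := by
  have hinj : Function.Injective Mᵀ.mulVec := by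
    intro a b hab; apply h; simp only [← Matrix.mulVec_transpose]; exact hab
  have hr : Mᵀ.rank = Fintype.card m := by
    have : Function.Injective Mᵀ.mulVecLin := hinj
    rw [Matrix.rank, LinearMap.finrank_range_of_inj this, Module.finrank_pi]
  have hM : M.rank = Fintype.card m := by rw [← Matrix.rank_transpose]; exact hr
  have : LinearMap.range M.mulVecLin = ⊤ := by
    apply Submodule.eq_top_of_finrank_eq
    rw [← Matrix.rank, hM, Module.finrank_pi]
  exact LinearMap.range_eq_top.mp this

section Traj

variable {nx nu ny : ℕ} {A : Matrix (Fin nx) (Fin nx) ℝ} {B : Matrix (Fin nx) (Fin nu) ℝ}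
  {C : Matrix (Fin ny) (Fin nx) ℝ} {D : Matrix (Fin ny) (Fin nu) ℝ}

lemma state_formula {N : ℕ} {u : ℕ → Fin nu → ℝ} {x : ℕ → Fin nx → ℝ}
    (hx : ∀ t < N, x (t + 1) = A *ᵥ x t + B *ᵥ u t) :
    ∀ k j, j + k ≤ N →
      x (j + k) = (A ^ k) *ᵥ x j + ∑ i ∈ range k, (A ^ (k - 1 - i) * B) *ᵥ u (j + i) := by
  intro k
  induction k with
  | zero => intro j hj; simp
  | succ k ih =>
    intro j hj
    have h2 : x (j + k + 1) = A *ᵥ x (j + k) + B *ᵥ u (j + k) := hx _ (by omega)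
    have h3 := ih j (by omega)
    have hdist : A *ᵥ (∑ i ∈ range k, (A ^ (k - 1 - i) * B) *ᵥ u (j + i)) =
        ∑ i ∈ range k, (A ^ (k + 1 - 1 - i) * B) *ᵥ u (j + i) := by
      rw [show ∀ v, A *ᵥ v = A.mulVecLin v from fun _ => rfl, map_sum]
      refine Finset.sum_congr rfl fun i hi => ?_
      have hik : i < k := Finset.mem_range.mp hi
      rw [Matrix.mulVecLin_apply, Matrix.mulVec_mulVec, ← Matrix.mul_assoc, ← pow_succ',
        show k - 1 - i + 1 = k + 1 - 1 - i by omega]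
    have hstep : x (j + (k + 1)) =
        A *ᵥ (A ^ k *ᵥ x j + ∑ i ∈ range k, (A ^ (k - 1 - i) * B) *ᵥ u (j + i))
        + B *ᵥ u (j + k) := by
      rw [show j + (k + 1) = j + k + 1 by omega, h2, h3]
    rw [hstep, Matrix.mulVec_add, hdist, sum_range_succ, Matrix.mulVec_mulVec, ← pow_succ']
    simp only [show k + 1 - 1 - k = 0 by omega, pow_zero, Matrix.one_mul]
    abel

lemma states_unique {T : ℕ} {u u' : ℕ → Fin nu → ℝ} {y y' : ℕ → Fin ny → ℝ}
    {x x' : ℕ → Fin nx → ℝ}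
    (h : IsStateTraj A B C D T u y x) (h' : IsStateTraj A B C D T u' y' x')
    (hu : ∀ t < T, u t = u' t) (h0 : x 0 = x' 0) :
    (∀ t ≤ T, x t = x' t) ∧ (∀ t < T, y t = y' t) := by
  have hx : ∀ t, t ≤ T → x t = x' t := by
    intro t
    induction t with
    | zero => intro _; exact h0
    | succ t ih =>
      intro ht
      have htT : t < T := by omega
      rw [(h t htT).1, (h' t htT).1, ih (by omega), hu t htT]
  refine ⟨hx, fun t ht => ?_⟩
  rw [(h t ht).2, (h' t ht).2, hx t (by omega), hu t ht]

lemma output_unique_of_obs {l L0 T : ℕ}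
    (hobs_inj : Function.Injective (obsMat A C l).mulVec)
    (hlL0 : l ≤ L0) (hL0T : L0 ≤ T)
    {u u' : ℕ → Fin nu → ℝ} {y y' : ℕ → Fin ny → ℝ} {x x' : ℕ → Fin nx → ℝ}
    (h : IsStateTraj A B C D T u y x) (h' : IsStateTraj A B C D T u' y' x')
    (hu : ∀ t < T, u t = u' t) (hy : ∀ t < L0, y t = y' t) :
    ∀ t < T, y t = y' t := by
  set δ : ℕ → Fin nx → ℝ := fun t => x t - x' t with hδdef
  have hδrec : ∀ t < T, δ (t + 1) = A *ᵥ δ t + B *ᵥ (fun _ : ℕ => (0 : Fin nu → ℝ)) t := by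
    intro t ht
    simp only [hδdef, (h t ht).1, (h' t ht).1, hu t ht, Matrix.mulVec_zero, add_zero,
      Matrix.mulVec_sub]
    abel
  have hδt : ∀ t ≤ T, δ t = (A ^ t) *ᵥ δ 0 := by
    intro t ht
    have := state_formula (u := fun _ => (0 : Fin nu → ℝ)) (x := δ) hδrec t 0 (by omega)
    simpa using this
  have hCδ : ∀ t < L0, C *ᵥ δ t = 0 := by
    intro t ht
    have h3 : y t - y' t = C *ᵥ δ t := by
      rw [(h t (by omega)).2, (h' t (by omega)).2, hu t (by omega)]
      simp only [hδdef, Matrix.mulVec_sub]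
      abel
    rw [← h3, hy t ht, sub_self]
  have hδ0 : δ 0 = 0 := by
    apply hobs_inj
    rw [Matrix.mulVec_zero]
    funext p
    have hp : (p.1 : ℕ) < L0 := lt_of_lt_of_le p.1.isLt hlL0
    have he : (obsMat A C l *ᵥ δ 0) p = ((C * A ^ (p.1 : ℕ)) *ᵥ δ 0) p.2 := rfl
    rw [he, ← Matrix.mulVec_mulVec, ← hδt (p.1 : ℕ) (by omega), hCδ _ hp]
    rfl
  have hx0 : x 0 = x' 0 := sub_eq_zero.mp hδ0
  exact (states_unique h h' hu hx0).2


end Traj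

lemma mulVec_finsum {m n J : Type*} [Fintype m] [Fintype n] [Fintype J]
    (M : Matrix m n ℝ) (g : J → ℝ) (v : J → n → ℝ) :
    M *ᵥ (∑ j, g j • v j) = ∑ j, g j • (M *ᵥ v j) := by
  rw [show ∀ w, M *ᵥ w = M.mulVecLin w from fun _ => rfl, map_sum]
  exact Finset.sum_congr rfl fun j _ => M.mulVecLin.map_smul (g j) (v j)

section Traj
variable {nx nu ny : ℕ} {A : Matrix (Fin nx) (Fin nx) ℝ} {B : Matrix (Fin nx) (Fin nu) ℝ}
  {C : Matrix (Fin ny) (Fin nx) ℝ} {D : Matrix (Fin ny) (Fin nu) ℝ}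

lemma superposition {N L : ℕ} (hLN : L ≤ N) {ud : ℕ → Fin nu → ℝ} {yd : ℕ → Fin ny → ℝ}
    {xd : ℕ → Fin nx → ℝ} (hxd : IsStateTraj A B C D N ud yd xd) (g : Fin (N - L + 1) → ℝ) :
    IsStateTraj A B C D L
      (fun t => ∑ j : Fin (N - L + 1), g j • ud (t + (j : ℕ)))
      (fun t => ∑ j : Fin (N - L + 1), g j • yd (t + (j : ℕ)))
      (fun t => ∑ j : Fin (N - L + 1), g j • xd (t + (j : ℕ))) := by
  intro t ht
  have hjN : ∀ j : Fin (N - L + 1), t + (j : ℕ) < N := by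
    intro j
    have := j.isLt
    omega
  constructor
  · rw [mulVec_finsum, mulVec_finsum, ← Finset.sum_add_distrib]
    refine Finset.sum_congr rfl fun j _ => ?_
    rw [show t + 1 + (j : ℕ) = t + (j : ℕ) + 1 by omega, (hxd _ (hjN j)).1, smul_add]
  · rw [mulVec_finsum, mulVec_finsum, ← Finset.sum_add_distrib]
    refine Finset.sum_congr rfl fun j _ => ?_
    rw [(hxd _ (hjN j)).2, smul_add]
end Traj
lemma sum_dotProduct' {n J : Type*} [Fintype n] (s : Finset J) (f : J → n → ℝ) (w : n → ℝ) :
    (∑ j ∈ s, f j) ⬝ᵥ w = ∑ j ∈ s, f j ⬝ᵥ w := by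
  simp only [dotProduct, Finset.sum_apply, Finset.sum_mul]
  exact Finset.sum_comm

lemma dotProduct_sum' {n J : Type*} [Fintype n] (s : Finset J) (w : n → ℝ) (f : J → n → ℝ) :
    w ⬝ᵥ (∑ j ∈ s, f j) = ∑ j ∈ s, w ⬝ᵥ f j := by
  simp only [dotProduct, Finset.sum_apply, Finset.mul_sum]
  exact Finset.sum_comm

lemma vecMul_sum_smul {m n J : Type*} [Fintype m] [Fintype n] (v : m → ℝ) (s : Finset J)
    (c : J → ℝ) (Mk : J → Matrix m n ℝ) :
    v ᵥ* (∑ j ∈ s, c j • Mk j) = ∑ j ∈ s, c j • (v ᵥ* Mk j) := by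
  funext i
  simp only [Matrix.vecMul, dotProduct, Finset.sum_apply, Pi.smul_apply,
    Matrix.sum_apply, Matrix.smul_apply, smul_eq_mul, Finset.mul_sum]
  rw [Finset.sum_comm]
  exact Finset.sum_congr rfl fun j _ => Finset.sum_congr rfl fun k _ => by ring

section Willems
variable {nx nu : ℕ} {A : Matrix (Fin nx) (Fin nx) ℝ} {B : Matrix (Fin nx) (Fin nu) ℝ}

lemma state_formula' {N : ℕ} {u : ℕ → Fin nu → ℝ} {x : ℕ → Fin nx → ℝ}
    (hx : ∀ t < N, x (t + 1) = A *ᵥ x t + B *ᵥ u t) :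
    ∀ k j, j + k ≤ N →
      x (j + k) = (A ^ k) *ᵥ x j + ∑ i ∈ range k, (A ^ (k - 1 - i) * B) *ᵥ u (j + i) := by
  intro k
  induction k with
  | zero => intro j hj; simp
  | succ k ih =>
    intro j hj
    have h2 : x (j + k + 1) = A *ᵥ x (j + k) + B *ᵥ u (j + k) := hx _ (by omega)
    have h3 := ih j (by omega)
    have hdist : A *ᵥ (∑ i ∈ range k, (A ^ (k - 1 - i) * B) *ᵥ u (j + i)) =
        ∑ i ∈ range k, (A ^ (k + 1 - 1 - i) * B) *ᵥ u (j + i) := by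
      rw [show ∀ v, A *ᵥ v = A.mulVecLin v from fun _ => rfl, map_sum]
      refine Finset.sum_congr rfl fun i hi => ?_
      have hik : i < k := Finset.mem_range.mp hi
      rw [Matrix.mulVecLin_apply, Matrix.mulVec_mulVec, ← Matrix.mul_assoc, ← pow_succ',
        show k - 1 - i + 1 = k + 1 - 1 - i by omega]
    have hstep : x (j + (k + 1)) =
        A *ᵥ (A ^ k *ᵥ x j + ∑ i ∈ range k, (A ^ (k - 1 - i) * B) *ᵥ u (j + i))
        + B *ᵥ u (j + k) := by
      rw [show j + (k + 1) = j + k + 1 by omega, h2, h3]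
    rw [hstep, Matrix.mulVec_add, hdist, sum_range_succ, Matrix.mulVec_mulVec, ← pow_succ']
    simp only [show k + 1 - 1 - k = 0 by omega, pow_zero, Matrix.one_mul]
    abel

lemma willems {N L : ℕ}
    (hctrb : (ctrbMat A B).rank = nx) (hLN : L + nx ≤ N)
    {ud : ℕ → Fin nu → ℝ} {xd : ℕ → Fin nx → ℝ}
    (hxd : ∀ t < N, xd (t + 1) = A *ᵥ xd t + B *ᵥ ud t)
    (hPE : (hankel ud (L + nx) N).rank = (L + nx) * nu) :
    Function.Surjective
      (Matrix.mulVec (Matrix.of fun (r : Fin nx ⊕ Fin L × Fin nu) (j : Fin (N - L + 1)) =>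
        Sum.elim (fun k => xd (j : ℕ) k) (fun p => ud ((p.1 : ℕ) + (j : ℕ)) p.2) r)) := by
  classical
  set M : Matrix (Fin nx ⊕ Fin L × Fin nu) (Fin (N - L + 1)) ℝ :=
    Matrix.of fun r j =>
      Sum.elim (fun k => xd (j : ℕ) k) (fun p => ud ((p.1 : ℕ) + (j : ℕ)) p.2) r with hMdef
  apply mulVec_surj_of_vecMul_inj
  have hker : ∀ η : Fin nx ⊕ Fin L × Fin nu → ℝ, η ᵥ* M = 0 → η = 0 := by
    intro η hη
    set ξ : Fin nx → ℝ := fun k => η (Sum.inl k) with hξdef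
    set ζ' : ℕ → Fin nu → ℝ :=
      fun t => if h : t < L then (fun i => η (Sum.inr (⟨t, h⟩, i))) else 0 with hζdef
    -- kernel relations
    have H : ∀ j : ℕ, j ≤ N - L → ξ ⬝ᵥ xd j + ∑ t ∈ range L, ζ' t ⬝ᵥ ud (t + j) = 0 := by
      intro j hj
      have hexp : (η ᵥ* M) (⟨j, by omega⟩ : Fin (N - L + 1)) =
          ξ ⬝ᵥ xd j + ∑ t : Fin L, (fun i => η (Sum.inr (t, i))) ⬝ᵥ ud ((t : ℕ) + j) := by
        simp only [Matrix.vecMul, dotProduct, hMdef, Matrix.of_apply,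
          Fintype.sum_sum_type, Fintype.sum_prod_type, Sum.elim_inl, Sum.elim_inr]
        rfl
      have hcol : ξ ⬝ᵥ xd j + ∑ t : Fin L, (fun i => η (Sum.inr (t, i))) ⬝ᵥ ud ((t : ℕ) + j)
          = 0 := by
        have h := congrFun hη (⟨j, by omega⟩ : Fin (N - L + 1))
        rw [hexp] at h
        simpa using h
      rw [← Fin.sum_univ_eq_sum_range (fun t => ζ' t ⬝ᵥ ud (t + j)) L]
      rw [show (∑ t : Fin L, ζ' (t : ℕ) ⬝ᵥ ud ((t : ℕ) + j))
          = ∑ t : Fin L, (fun i => η (Sum.inr (t, i))) ⬝ᵥ ud ((t : ℕ) + j) from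
        Finset.sum_congr rfl fun t _ => by rw [hζdef]; simp only; rw [dif_pos t.isLt]]
      exact hcol
    -- annihilating polynomial (Cayley–Hamilton)
    set c : ℕ → ℝ := fun k => (Matrix.charpoly A).coeff k with hcdef
    have hdeg : (Matrix.charpoly A).natDegree = nx := by
      rw [Matrix.charpoly_natDegree_eq_dim, Fintype.card_fin]
    have hcnx : c nx = 1 := by
      have h := (Matrix.charpoly_monic A).coeff_natDegree
      rw [hdeg] at h
      exact h
    have hAnn : ∑ k ∈ range (nx + 1), c k • A ^ k = 0 := by
      have h1 := Matrix.aeval_self_charpoly A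
      rw [Polynomial.aeval_eq_sum_range, hdeg] at h1
      exact h1
    have hannξ : ∑ k ∈ range (nx + 1), c k • (ξ ᵥ* A ^ k) = 0 := by
      rw [← vecMul_sum_smul, hAnn, Matrix.vecMul_zero]
    -- PE injectivity
    have hPEinj : Function.Injective ((hankel ud (L + nx) N).vecMul ·) := by
      apply vecMul_inj_of_rank_rows
      rw [hPE, Fintype.card_prod, Fintype.card_fin, Fintype.card_fin]
    set βf : ℕ → Fin nu → ℝ := fun m => ∑ k ∈ range (nx + 1), c k •
        (if k ≤ m then ζ' (m - k) else ξ ᵥ* (A ^ (k - 1 - m) * B)) with hβdef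
    -- the key column computation
    have hβcol : (fun p : Fin (L + nx) × Fin nu => βf (p.1 : ℕ) p.2) ᵥ* hankel ud (L + nx) N
        = 0 := by
      funext jc
      set j := (jc : ℕ) with hjdef
      have hj : j + nx ≤ N - L := by have := jc.isLt; omega
      have e1 : ((fun p : Fin (L + nx) × Fin nu => βf (p.1 : ℕ) p.2) ᵥ*
          hankel ud (L + nx) N) jc = ∑ m ∈ range (L + nx), βf m ⬝ᵥ ud (m + j) := by
        rw [← Fin.sum_univ_eq_sum_range (fun m => βf m ⬝ᵥ ud (m + j)) (L + nx)]
        simp only [Matrix.vecMul, dotProduct, hankel, Matrix.of_apply,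
          Fintype.sum_prod_type]
        rfl
      have e2 : ∀ m : ℕ, βf m ⬝ᵥ ud (m + j) = ∑ k ∈ range (nx + 1),
          c k * ((if k ≤ m then ζ' (m - k) else ξ ᵥ* (A ^ (k - 1 - m) * B)) ⬝ᵥ ud (m + j)) := by
        intro m
        rw [hβdef]
        simp only
        rw [sum_dotProduct']
        exact Finset.sum_congr rfl fun k _ => smul_dotProduct (c k) _ _
      have inner : ∀ k, k ≤ nx →
          ∑ m ∈ range (L + nx), ((if k ≤ m then ζ' (m - k) else ξ ᵥ* (A ^ (k - 1 - m) * B))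
            ⬝ᵥ ud (m + j)) = -((ξ ᵥ* A ^ k) ⬝ᵥ xd j) := by
        intro k hk
        rw [Finset.range_eq_Ico,
          ← Finset.sum_Ico_consecutive _ (Nat.zero_le k) (by omega : k ≤ L + nx)]
        have hfirst : ∑ m ∈ Finset.Ico 0 k,
            ((if k ≤ m then ζ' (m - k) else ξ ᵥ* (A ^ (k - 1 - m) * B)) ⬝ᵥ ud (m + j)) =
            ∑ m ∈ range k, (ξ ᵥ* (A ^ (k - 1 - m) * B)) ⬝ᵥ ud (j + m) := by
          rw [← Finset.range_eq_Ico]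
          refine Finset.sum_congr rfl fun m hm => ?_
          have : m < k := Finset.mem_range.mp hm
          rw [if_neg (by omega), show m + j = j + m by omega]
        have hsecond : ∑ m ∈ Finset.Ico k (L + nx),
            ((if k ≤ m then ζ' (m - k) else ξ ᵥ* (A ^ (k - 1 - m) * B)) ⬝ᵥ ud (m + j)) =
            ∑ t ∈ range L, ζ' t ⬝ᵥ ud (t + (j + k)) := by
          rw [Finset.sum_Ico_eq_sum_range]
          have he : ∀ t ∈ range (L + nx - k),
              ((if k ≤ k + t then ζ' (k + t - k) else ξ ᵥ* (A ^ (k - 1 - (k + t)) * B))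
                ⬝ᵥ ud (k + t + j)) = ζ' t ⬝ᵥ ud (t + (j + k)) := by
            intro t _
            rw [if_pos (by omega), show k + t - k = t by omega,
              show k + t + j = t + (j + k) by omega]
          rw [Finset.sum_congr rfl he]
          symm
          apply Finset.sum_subset (Finset.range_subset_range.mpr (by omega))
          intro t _ ht
          have htL : ¬ t < L := fun hc => ht (Finset.mem_range.mpr hc)
          rw [hζdef]
          simp only
          rw [dif_neg htL]
          exact zero_dotProduct _
        have hH := H (j + k) (by omega)
        have hsf := state_formula' hxd k j (by omega)
        have hdot : ξ ⬝ᵥ xd (j + k) = (ξ ᵥ* A ^ k) ⬝ᵥ xd j +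
            ∑ m ∈ range k, (ξ ᵥ* (A ^ (k - 1 - m) * B)) ⬝ᵥ ud (j + m) := by
          rw [hsf, dotProduct_add, Matrix.dotProduct_mulVec, dotProduct_sum']
          congr 1
          exact Finset.sum_congr rfl fun m _ => Matrix.dotProduct_mulVec _ _ _
        rw [hfirst, hsecond]
        have h2 : ∑ t ∈ range L, ζ' t ⬝ᵥ ud (t + (j + k)) = -(ξ ⬝ᵥ xd (j + k)) := by
          linarith [hH]
        rw [h2]
        linarith [hdot]
      -- assemble
      rw [e1]
      rw [Finset.sum_congr rfl fun m _ => e2 m, Finset.sum_comm]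
      have : ∀ k ∈ range (nx + 1), ∑ m ∈ range (L + nx),
          c k * ((if k ≤ m then ζ' (m - k) else ξ ᵥ* (A ^ (k - 1 - m) * B)) ⬝ᵥ ud (m + j)) =
          c k * -((ξ ᵥ* A ^ k) ⬝ᵥ xd j) := by
        intro k hk
        rw [← Finset.mul_sum, inner k (by have := Finset.mem_range.mp hk; omega)]
      rw [Finset.sum_congr rfl this]
      have : ∑ k ∈ range (nx + 1), c k * -((ξ ᵥ* A ^ k) ⬝ᵥ xd j) =
          -((∑ k ∈ range (nx + 1), c k • (ξ ᵥ* A ^ k)) ⬝ᵥ xd j) := by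
        rw [sum_dotProduct', ← Finset.sum_neg_distrib]
        refine Finset.sum_congr rfl fun k _ => ?_
        rw [smul_dotProduct]
        simp [smul_eq_mul]
      rw [this, hannξ, zero_dotProduct, neg_zero]
      rfl
    have hβ0 : ∀ m, m < L + nx → βf m = 0 := by
      have hz : (fun p : Fin (L + nx) × Fin nu => βf (p.1 : ℕ) p.2) = 0 := by
        apply hPEinj
        show (fun p : Fin (L + nx) × Fin nu => βf (p.1 : ℕ) p.2) ᵥ* hankel ud (L + nx) N
          = (0 : Fin (L + nx) × Fin nu → ℝ) ᵥ* hankel ud (L + nx) N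
        rw [hβcol, Matrix.zero_vecMul]
      intro m hm
      funext i
      exact congrFun hz ((⟨m, hm⟩ : Fin (L + nx)), i)
    -- ζ' vanishes
    have hζ0 : ∀ r t, L ≤ t + r → ζ' t = 0 := by
      intro r
      induction r with
      | zero =>
        intro t ht
        rw [hζdef]
        simp only
        rw [dif_neg (by omega)]
      | succ r ih =>
        intro t ht
        by_cases hcase : L ≤ t + r
        · exact ih t hcase
        funext i
        have hb := congrFun (hβ0 (t + nx) (by omega)) i
        rw [hβdef] at hb
        simp only [Finset.sum_apply, Pi.smul_apply, smul_eq_mul] at hb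
        rw [Finset.sum_range_succ] at hb
        have hz2 : ∀ k ∈ range nx,
            c k * (if k ≤ t + nx then ζ' (t + nx - k) else ξ ᵥ* (A ^ (k - 1 - (t + nx)) * B)) i
              = 0 := by
          intro k hk
          have hk' : k < nx := Finset.mem_range.mp hk
          rw [if_pos (by omega), ih (t + nx - k) (by omega)]
          simp
        rw [Finset.sum_congr rfl hz2, Finset.sum_const_zero, zero_add,
          if_pos (by omega : nx ≤ t + nx), hcnx, one_mul, show t + nx - nx = t by omega] at hb
        exact hb
    have hζall : ∀ t, ζ' t = 0 := fun t => hζ0 L t (by omega)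
    -- ξ annihilates the controllability matrix
    have hξB : ∀ r, r < nx → ξ ᵥ* (A ^ r * B) = 0 := by
      intro r
      induction r using Nat.strong_induction_on with
      | _ r ih =>
        intro hr
        funext i
        have hb := congrFun (hβ0 (nx - 1 - r) (by omega)) i
        rw [hβdef] at hb
        simp only [Finset.sum_apply, Pi.smul_apply, smul_eq_mul] at hb
        rw [Finset.sum_eq_single nx] at hb
        · rw [hcnx, one_mul, if_neg (by omega), show nx - 1 - (nx - 1 - r) = r by omega] at hb
          exact hb
        · intro k hk hkne
          have hk' : k < nx := by have := Finset.mem_range.mp hk; omega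
          by_cases hkm : k ≤ nx - 1 - r
          · rw [if_pos hkm, hζall]
            simp
          · rw [if_neg hkm, ih (k - 1 - (nx - 1 - r)) (by omega) (by omega)]
            simp
        · intro hnx
          exact absurd (Finset.self_mem_range_succ nx) hnx
    have hξctrb : ξ ᵥ* ctrbMat A B = 0 := by
      funext p
      have he : (ξ ᵥ* ctrbMat A B) p = (ξ ᵥ* (A ^ (p.1 : ℕ) * B)) p.2 := rfl
      rw [he, hξB (p.1 : ℕ) p.1.isLt]
      rfl
    have hξ0 : ξ = 0 := by
      have hinj := vecMul_inj_of_rank_rows (ctrbMat A B) (by rw [hctrb, Fintype.card_fin])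
      apply hinj
      show ξ ᵥ* ctrbMat A B = (0 : Fin nx → ℝ) ᵥ* ctrbMat A B
      rw [hξctrb, Matrix.zero_vecMul]
    funext r
    cases r with
    | inl k => exact congrFun hξ0 k
    | inr p =>
      have h1 : ζ' (p.1 : ℕ) = 0 := hζall _
      rw [hζdef] at h1
      simp only at h1
      rw [dif_pos p.1.isLt] at h1
      have := congrFun h1 p.2
      simpa using this
  intro a b hab
  have hab' : a ᵥ* M = b ᵥ* M := hab
  have h0 : (a - b) ᵥ* M = 0 := by rw [Matrix.sub_vecMul, hab', sub_self]
  have := hker _ h0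
  exact sub_eq_zero.mp this

end Willems

/-- Data-driven simulation with Hankel matrices (Markovsky–Rapisarda / Fundamental Lemma):
if the data input is persistently exciting of order `L + n_x` and the system is controllable
and observable with lag `l ≤ L_0`, then (i) a preimage `g` of
`(u_ini, y_ini, u_s)` under `[U_p; Y_p; U_f]` exists, and (ii) for every such `g`, the unique
simulated output satisfies `y_s = Y_f g`. -/
theorem dd_sim_hankel
    {nx nu ny : ℕ} (hnu : 1 ≤ nu)
    (A : Matrix (Fin nx) (Fin nx) ℝ) (B : Matrix (Fin nx) (Fin nu) ℝ)
    (C : Matrix (Fin ny) (Fin nx) ℝ) (D : Matrix (Fin ny) (Fin nu) ℝ)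
    -- minimality: controllability and observability
    (hctrb : (ctrbMat A B).rank = nx)
    (hobs : (obsMat A C nx).rank = nx)
    -- `l` is the lag of the system
    (l : ℕ) (hlagrank : (obsMat A C l).rank = nx)
    (hlagmin : ∀ i < l, (obsMat A C i).rank ≠ nx)
    (N L0 Ls : ℕ) (hL0 : l ≤ L0) (hLN : L0 + Ls + nx ≤ N)
    -- the data trajectory
    (ud : ℕ → Fin nu → ℝ) (yd : ℕ → Fin ny → ℝ)
    (hdata : IsTraj A B C D N ud yd)
    -- the initial trajectory
    (uini : ℕ → Fin nu → ℝ) (yini : ℕ → Fin ny → ℝ)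
    (hini : IsTraj A B C D L0 uini yini)
    -- the simulated input
    (us : ℕ → Fin nu → ℝ)
    -- persistence of excitation of order `L + n_x`
    (hPE : (hankel ud (L0 + Ls + nx) N).rank = (L0 + Ls + nx) * nu) :
    (∃ g : Fin (N - (L0 + Ls) + 1) → ℝ,
      (blockRows ud 0 L0 (N - (L0 + Ls) + 1)).mulVec g = (fun p => uini p.1 p.2) ∧
      (blockRows yd 0 L0 (N - (L0 + Ls) + 1)).mulVec g = (fun p => yini p.1 p.2) ∧
      (blockRows ud L0 Ls (N - (L0 + Ls) + 1)).mulVec g = (fun p => us p.1 p.2)) ∧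
    (∀ g : Fin (N - (L0 + Ls) + 1) → ℝ,
      (blockRows ud 0 L0 (N - (L0 + Ls) + 1)).mulVec g = (fun p => uini p.1 p.2) →
      (blockRows yd 0 L0 (N - (L0 + Ls) + 1)).mulVec g = (fun p => yini p.1 p.2) →
      (blockRows ud L0 Ls (N - (L0 + Ls) + 1)).mulVec g = (fun p => us p.1 p.2) →
      ∀ ys : ℕ → Fin ny → ℝ,
        IsTraj A B C D (L0 + Ls)
          (fun t => if t < L0 then uini t else us (t - L0))
          (fun t => if t < L0 then yini t else ys (t - L0)) →
        (fun p : Fin Ls × Fin ny => ys p.1 p.2) =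
          (blockRows yd L0 Ls (N - (L0 + Ls) + 1)).mulVec g) := by
  classical
  obtain ⟨xd, hxd⟩ := hdata
  obtain ⟨xini, hxini⟩ := hini
  have hxdrec : ∀ t < N, xd (t + 1) = A *ᵥ xd t + B *ᵥ ud t := fun t ht => (hxd t ht).1
  have hLleN : L0 + Ls ≤ N := by omega
  have hobs_inj : Function.Injective (obsMat A C l).mulVec :=
    inj_of_rank_cols _ (by rw [hlagrank, Fintype.card_fin])
  -- generic facts about superposition trajectories
  have hsup := fun g : Fin (N - (L0 + Ls) + 1) → ℝ =>
    superposition (A := A) (B := B) (C := C) (D := D) hLleN hxd g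
  have key_u : ∀ (g : Fin (N - (L0 + Ls) + 1) → ℝ) (t : ℕ) (i : Fin nu),
      (∑ j : Fin (N - (L0 + Ls) + 1), g j • ud (t + (j : ℕ))) i
        = ∑ j : Fin (N - (L0 + Ls) + 1), ud (t + (j : ℕ)) i * g j := by
    intro g t i
    rw [Finset.sum_apply]
    exact Finset.sum_congr rfl fun j _ => by simp [mul_comm]
  have key_y : ∀ (g : Fin (N - (L0 + Ls) + 1) → ℝ) (t : ℕ) (i : Fin ny),
      (∑ j : Fin (N - (L0 + Ls) + 1), g j • yd (t + (j : ℕ))) i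
        = ∑ j : Fin (N - (L0 + Ls) + 1), yd (t + (j : ℕ)) i * g j := by
    intro g t i
    rw [Finset.sum_apply]
    exact Finset.sum_congr rfl fun j _ => by simp [mul_comm]
  have key_x : ∀ (g : Fin (N - (L0 + Ls) + 1) → ℝ) (t : ℕ) (k : Fin nx),
      (∑ j : Fin (N - (L0 + Ls) + 1), g j • xd (t + (j : ℕ))) k
        = ∑ j : Fin (N - (L0 + Ls) + 1), xd (t + (j : ℕ)) k * g j := by
    intro g t k
    rw [Finset.sum_apply]
    exact Finset.sum_congr rfl fun j _ => by simp [mul_comm]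
  constructor
  · -- existence
    have hsurj := willems (A := A) (B := B) (N := N) (L := L0 + Ls) hctrb hLN hxdrec hPE
    obtain ⟨g, hg⟩ := hsurj (Sum.elim (xini 0)
      (fun p : Fin (L0 + Ls) × Fin nu =>
        if (p.1 : ℕ) < L0 then uini (p.1 : ℕ) p.2 else us ((p.1 : ℕ) - L0) p.2))
    have hgu : ∀ (t : ℕ), t < L0 + Ls → ∀ (i : Fin nu),
        (∑ j : Fin (N - (L0 + Ls) + 1), ud (t + (j : ℕ)) i * g j)
          = if t < L0 then uini t i else us (t - L0) i := by
      intro t ht i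
      have := congrFun hg (Sum.inr (⟨t, ht⟩, i))
      simpa [Matrix.mulVec, dotProduct] using this
    have hgx : ∀ k, (∑ j : Fin (N - (L0 + Ls) + 1), xd (j : ℕ) k * g j) = xini 0 k := by
      intro k
      have := congrFun hg (Sum.inl k)
      simpa [Matrix.mulVec, dotProduct] using this
    refine ⟨g, ?_, ?_, ?_⟩
    · funext p
      have h1 := hgu (p.1 : ℕ) (by omega) p.2
      rw [if_pos (by exact p.1.isLt)] at h1
      simpa [blockRows, Matrix.mulVec, dotProduct] using h1
    · -- Y_p g = y_ini via superposition + uniqueness from equal initial state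
      have hsupg := hsup g
      have hsupL0 : IsStateTraj A B C D L0
          (fun t => ∑ j : Fin (N - (L0 + Ls) + 1), g j • ud (t + (j : ℕ)))
          (fun t => ∑ j : Fin (N - (L0 + Ls) + 1), g j • yd (t + (j : ℕ)))
          (fun t => ∑ j : Fin (N - (L0 + Ls) + 1), g j • xd (t + (j : ℕ))) :=
        fun t ht => hsupg t (by omega)
      have hu : ∀ t < L0,
          (∑ j : Fin (N - (L0 + Ls) + 1), g j • ud (t + (j : ℕ))) = uini t := by
        intro t ht
        funext i
        rw [key_u]
        have h1 := hgu t (by omega) i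
        rw [if_pos ht] at h1
        exact h1
      have hx0 : (fun t => ∑ j : Fin (N - (L0 + Ls) + 1), g j • xd (t + (j : ℕ))) 0
          = xini 0 := by
        funext k
        show (∑ j : Fin (N - (L0 + Ls) + 1), g j • xd (0 + (j : ℕ))) k = xini 0 k
        rw [key_x]
        rw [show (∑ j : Fin (N - (L0 + Ls) + 1), xd (0 + (j : ℕ)) k * g j)
            = ∑ j : Fin (N - (L0 + Ls) + 1), xd ((j : ℕ)) k * g j from
          Finset.sum_congr rfl fun j _ => by rw [Nat.zero_add]]
        exact hgx k
      have hyy := (states_unique hsupL0 hxini hu hx0).2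
      funext p
      have h2 := congrFun (hyy (p.1 : ℕ) p.1.isLt) p.2
      rw [key_y] at h2
      simpa [blockRows, Matrix.mulVec, dotProduct] using h2
    · funext p
      have h1 := hgu (L0 + (p.1 : ℕ)) (by omega) p.2
      rw [if_neg (by omega : ¬ L0 + (p.1 : ℕ) < L0),
        show L0 + (p.1 : ℕ) - L0 = (p.1 : ℕ) by omega] at h1
      simpa [blockRows, Matrix.mulVec, dotProduct] using h1
  · -- uniqueness of the simulated output
    intro g hg1 hg2 hg3 ys ⟨xc, hxc⟩
    have hsupg := hsup g
    have hg1' : ∀ (t : ℕ), t < L0 → ∀ i,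
        (∑ j : Fin (N - (L0 + Ls) + 1), ud (t + (j : ℕ)) i * g j) = uini t i := by
      intro t ht i
      have := congrFun hg1 (⟨t, ht⟩, i)
      simpa [blockRows, Matrix.mulVec, dotProduct] using this
    have hg2' : ∀ (t : ℕ), t < L0 → ∀ i,
        (∑ j : Fin (N - (L0 + Ls) + 1), yd (t + (j : ℕ)) i * g j) = yini t i := by
      intro t ht i
      have := congrFun hg2 (⟨t, ht⟩, i)
      simpa [blockRows, Matrix.mulVec, dotProduct] using this
    have hg3' : ∀ (s : ℕ), s < Ls → ∀ i,
        (∑ j : Fin (N - (L0 + Ls) + 1), ud (L0 + s + (j : ℕ)) i * g j) = us s i := by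
      intro s hs i
      have := congrFun hg3 (⟨s, hs⟩, i)
      simpa [blockRows, Matrix.mulVec, dotProduct] using this
    have hu : ∀ t < L0 + Ls,
        (∑ j : Fin (N - (L0 + Ls) + 1), g j • ud (t + (j : ℕ)))
          = (fun t => if t < L0 then uini t else us (t - L0)) t := by
      intro t ht
      funext i
      show (∑ j : Fin (N - (L0 + Ls) + 1), g j • ud (t + (j : ℕ))) i
        = (if t < L0 then uini t else us (t - L0)) i
      rw [key_u]
      by_cases htL0 : t < L0
      · rw [if_pos htL0]
        exact hg1' t htL0 i
      · rw [if_neg htL0]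
        have hs : t - L0 < Ls := by omega
        have := hg3' (t - L0) hs i
        rw [show L0 + (t - L0) = t by omega] at this
        exact this
    have hy : ∀ t < L0,
        (∑ j : Fin (N - (L0 + Ls) + 1), g j • yd (t + (j : ℕ)))
          = (fun t => if t < L0 then yini t else ys (t - L0)) t := by
      intro t ht
      funext i
      show (∑ j : Fin (N - (L0 + Ls) + 1), g j • yd (t + (j : ℕ))) i
        = (if t < L0 then yini t else ys (t - L0)) i
      rw [key_y, if_pos ht]
      exact hg2' t ht i
    have hfinal := output_unique_of_obs hobs_inj hL0 (by omega : L0 ≤ L0 + Ls)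
      hsupg hxc hu hy
    funext p
    have h1 : (∑ j : Fin (N - (L0 + Ls) + 1), g j • yd (L0 + (p.1 : ℕ) + (j : ℕ))) p.2
        = (if L0 + (p.1 : ℕ) < L0 then yini (L0 + (p.1 : ℕ))
            else ys (L0 + (p.1 : ℕ) - L0)) p.2 :=
      congrFun (hfinal (L0 + (p.1 : ℕ)) (by omega)) p.2
    rw [key_y, if_neg (by omega : ¬ L0 + (p.1 : ℕ) < L0),
      show L0 + (p.1 : ℕ) - L0 = (p.1 : ℕ) by omega] at h1
    rw [← h1]
    simp [blockRows, Matrix.mulVec, dotProduct]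


end DDSim
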